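/- Let φ : ℝ → ℝ be strictly decreasing (strictly antitone) and convex, and let g : ℝ → ℝ satisfy g(φ(x)) = x for all x ∈ ℝ (so g restricts to the inverse of φ on its range T = Set.range φ). Then the function g_φ defined on T by g_φ(x) = x + φ(−g(x)) is convex on T, i.e., ConvexOn ℝ (Set.range φ) (fun x => x + φ(−g(x))). -/

import Mathlib

/-- If `φ : ℝ → ℝ` is strictly decreasing and convex, and `g` is a left inverse of `φ`
(so `g` restricts to the inverse of `φ` on its range `T = Set.range φ`), then the
surrogate-loss regularizer `g_φ(x) = x + φ(−g(x))` is convex on `T`. -/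
theorem g_phi_convexOn
    (φ g : ℝ → ℝ) (hφ_anti : StrictAnti φ) (hφ_conv : ConvexOn ℝ Set.univ φ)
    (hg : ∀ x : ℝ, g (φ x) = x) :
    ConvexOn ℝ (Set.range φ) (fun x => x + φ (-g x)) := by
  have hcont : Continuous φ := by
    exact continuousOn_univ.mp (hφ_conv.continuousOn isOpen_univ)
  have hrange : Convex ℝ (Set.range φ) := by
    rintro x ⟨a, rfl⟩ y ⟨b, rfl⟩ s t hs ht hst
    have h1 : s • φ a + t • φ b ∈ Set.uIcc (φ a) (φ b) := by
      simp only [smul_eq_mul]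
      have hs1 : s = 1 - t := by linarith
      subst hs1
      rcases le_total (φ a) (φ b) with h | h
      · rw [Set.uIcc_of_le h]
        constructor <;>
          nlinarith [mul_nonneg ht (sub_nonneg.mpr h), mul_nonneg hs (sub_nonneg.mpr h)]
      · rw [Set.uIcc_of_ge h]
        constructor <;>
          nlinarith [mul_nonneg ht (sub_nonneg.mpr h), mul_nonneg hs (sub_nonneg.mpr h)]
    have h2 := intermediate_value_uIcc (f := φ) (a := a) (b := b) hcont.continuousOn
    obtain ⟨c, _, hc⟩ := h2 h1
    exact ⟨c, hc⟩
  refine ⟨hrange, ?_⟩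
  rintro x ⟨a, rfl⟩ y ⟨b, rfl⟩ s t hs ht hst
  -- the combination lies in the range
  obtain ⟨c, hc⟩ := hrange ⟨a, rfl⟩ ⟨b, rfl⟩ hs ht hst
  simp only [hg]
  rw [← hc, hg]
  -- φ (s a + t b) ≤ φ c = s φ a + t φ b
  have key : φ (s * a + t * b) ≤ φ c := by
    rw [hc]
    have := hφ_conv.2 (Set.mem_univ a) (Set.mem_univ b) hs ht hst
    simpa [smul_eq_mul] using this
  have hcle : c ≤ s * a + t * b := (hφ_anti.le_iff_ge).mp key
  have h3 : φ (-c) ≤ φ (-(s * a + t * b)) := hφ_anti.antitone (by linarith)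
  have h4 : φ (s * (-a) + t * (-b)) ≤ s * φ (-a) + t * φ (-b) := by
    have := hφ_conv.2 (Set.mem_univ (-a)) (Set.mem_univ (-b)) hs ht hst
    simpa [smul_eq_mul] using this
  have h5 : -(s * a + t * b) = s * (-a) + t * (-b) := by ring
  simp only [smul_eq_mul]
  rw [h5] at h3
  simp only [smul_eq_mul] at hc
  linarith
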